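/- On a nearly cosymplectic manifold, for every tangent vector X in the horizontal distribution F = ker η, the bracket [X, θX] vanishes (when X is extended so that the projected connection derivative vanishes at the point); equivalently, ∇_X(θX) - ∇_{θX} X is proportional to neither part and is zero at such a point. -/
import Mathlib


/-- Abstract algebraic model of a nearly cosymplectic (almost contact metric)
manifold: `A` plays the role of the algebra of smooth functions, `V` of the
module of vector fields, `D` of the directional derivative, `g` of the metric,
`nabla` of the Levi-Civita connection, `θ` of the structure tensor and `ξ` of
the characteristic (Reeb) unit vector field, with `η X = g X ξ`. -/
structure NearlyCosymplectic where
  A : Type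
  V : Type
  [ringA : CommRing A]
  [algA : Algebra ℝ A]
  [grpV : AddCommGroup V]
  [modV : Module A V]
  /-- directional derivative of functions along a vector field -/
  D : V → A → A
  D_addl : ∀ X Y f, D (X + Y) f = D X f + D Y f
  D_smull : ∀ (f : A) (X : V) (h : A), D (f • X) h = f * D X h
  D_addr : ∀ (X : V) (f h : A), D X (f + h) = D X f + D X h
  D_mul : ∀ (X : V) (f h : A), D X (f * h) = D X f * h + f * D X h
  /-- Lie bracket of vector fields -/
  bracket : V → V → V
  bracket_D : ∀ X Y f, D (bracket X Y) f = D X (D Y f) - D Y (D X f)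
  /-- the Riemannian metric -/
  g : V → V → A
  g_symm : ∀ X Y, g X Y = g Y X
  g_addl : ∀ X Y Z, g (X + Y) Z = g X Z + g Y Z
  g_smull : ∀ (f : A) X Y, g (f • X) Y = f * g X Y
  /-- the Levi-Civita connection -/
  nabla : V → V → V
  nabla_addl : ∀ X Y Z, nabla (X + Y) Z = nabla X Z + nabla Y Z
  nabla_smull : ∀ (f : A) X Y, nabla (f • X) Y = f • nabla X Y
  nabla_addr : ∀ X Y Z, nabla X (Y + Z) = nabla X Y + nabla X Z
  nabla_leibniz : ∀ (X : V) (f : A) (Y : V),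
    nabla X (f • Y) = D X f • Y + f • nabla X Y
  metric_compat : ∀ X Y Z, D X (g Y Z) = g (nabla X Y) Z + g Y (nabla X Z)
  torsion_free : ∀ X Y, nabla X Y - nabla Y X = bracket X Y
  /-- the structure (1,1)-tensor θ -/
  θ : V → V
  θ_add : ∀ X Y, θ (X + Y) = θ X + θ Y
  θ_smul : ∀ (f : A) X, θ (f • X) = f • θ X
  /-- the characteristic vector field ξ -/
  ξ : V
  /-- ξ is a unit vector field (and η(ξ)=1, with η X = g X ξ) -/
  ξ_unit : g ξ ξ = 1
  /-- θ² = -Id + η ⊗ ξ -/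
  θ_sq : ∀ X, θ (θ X) = -X + g X ξ • ξ
  /-- metric compatibility of the almost contact structure -/
  θ_compat : ∀ X Y, g (θ X) (θ Y) = g X Y - g X ξ * g Y ξ
  /-- the nearly cosymplectic condition (∇_X θ)(Y) + (∇_Y θ)(X) = 0 -/
  nearly : ∀ X Y,
    (nabla X (θ Y) - θ (nabla X Y)) + (nabla Y (θ X) - θ (nabla Y X)) = 0

attribute [instance] NearlyCosymplectic.ringA NearlyCosymplectic.algA
  NearlyCosymplectic.grpV NearlyCosymplectic.modV

namespace NearlyCosymplectic

variable (M : NearlyCosymplectic)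

/-- the covariant derivative (∇_X θ)(Y) -/
def nablaθ (X Y : M.V) : M.V := M.nabla X (M.θ Y) - M.θ (M.nabla X Y)

/-- the Riemann curvature operator R(X,Y)Z = [∇_X,∇_Y]Z - ∇_{[X,Y]}Z -/
def R (X Y Z : M.V) : M.V :=
  M.nabla X (M.nabla Y Z) - M.nabla Y (M.nabla X Z) - M.nabla (M.bracket X Y) Z

/-- the second covariant derivative (∇²_{X,Y} θ)(Z) -/
def nabla2θ (X Y Z : M.V) : M.V :=
  M.nabla X (M.nablaθ Y Z) - M.nablaθ (M.nabla X Y) Z - M.nablaθ Y (M.nabla X Z)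

end NearlyCosymplectic

namespace NearlyCosymplectic

variable (M : NearlyCosymplectic)

lemma half_A (a : M.A) (h : a + a = 0) : a = 0 := by
  have h1 : (algebraMap ℝ M.A (1/2) * algebraMap ℝ M.A 2) = 1 := by
    rw [← map_mul]; norm_num
  have h2 : (algebraMap ℝ M.A 2) * a = 0 := by
    have e : (algebraMap ℝ M.A 2 : M.A) = 2 := map_ofNat _ 2
    rw [e]; linear_combination h
  calc a = (algebraMap ℝ M.A (1/2) * algebraMap ℝ M.A 2) * a := by rw [h1, one_mul]
    _ = algebraMap ℝ M.A (1/2) * ((algebraMap ℝ M.A 2) * a) := by ring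
    _ = 0 := by rw [h2, mul_zero]

lemma half_V (z : M.V) (h : z + z = 0) : z = 0 := by
  have h1 : (algebraMap ℝ M.A (1/2) * algebraMap ℝ M.A 2) = 1 := by
    rw [← map_mul]; norm_num
  have h2 : (algebraMap ℝ M.A 2 : M.A) • z = 0 := by
    have e : (algebraMap ℝ M.A 2 : M.A) = 2 := map_ofNat _ 2
    rw [e, two_smul, h]
  calc z = ((1:M.A)) • z := (one_smul _ z).symm
    _ = (algebraMap ℝ M.A (1/2) * algebraMap ℝ M.A 2) • z := by rw [h1]
    _ = algebraMap ℝ M.A (1/2) • ((algebraMap ℝ M.A 2 : M.A) • z) := by rw [mul_smul]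
    _ = 0 := by rw [h2, smul_zero]

lemma D_zero (X : M.V) : M.D X (0:M.A) = 0 := by
  have h := M.D_addr X 0 0
  rw [add_zero] at h
  linear_combination -h

lemma g_zerol (Y : M.V) : M.g 0 Y = 0 := by
  have h := M.g_smull 0 Y Y
  rwa [zero_smul, zero_mul] at h

lemma g_negl (X Y : M.V) : M.g (-X) Y = -(M.g X Y) := by
  have h := M.g_addl X (-X) Y
  rw [add_neg_cancel, M.g_zerol] at h
  linear_combination -h

lemma g_subl (X Y Z : M.V) : M.g (X - Y) Z = M.g X Z - M.g Y Z := by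
  rw [sub_eq_add_neg, M.g_addl, M.g_negl, ← sub_eq_add_neg]

lemma g_addr (X Y Z : M.V) : M.g X (Y + Z) = M.g X Y + M.g X Z := by
  rw [M.g_symm X (Y+Z), M.g_addl, M.g_symm Y X, M.g_symm Z X]

lemma g_smulr (f : M.A) (X Y : M.V) : M.g X (f • Y) = f * M.g X Y := by
  rw [M.g_symm X (f • Y), M.g_smull, M.g_symm Y X]

lemma g_negr (X Y : M.V) : M.g X (-Y) = -(M.g X Y) := by
  rw [M.g_symm X (-Y), M.g_negl, M.g_symm Y X]

lemma θ_zero : M.θ 0 = 0 := by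
  have h := M.θ_smul 0 0
  rwa [zero_smul, zero_smul] at h

lemma θ_neg (X : M.V) : M.θ (-X) = -(M.θ X) := by
  have h := M.θ_smul (-1) X
  rwa [neg_one_smul M.A X, neg_one_smul M.A (M.θ X)] at h

lemma nabla_zeror (X : M.V) : M.nabla X 0 = 0 := by
  have h := M.nabla_addr X 0 0
  rw [add_zero] at h
  have h2 : M.nabla X 0 + 0 = M.nabla X 0 + M.nabla X 0 := by rw [add_zero]; exact h
  exact (add_left_cancel h2).symm

lemma nabla_negr (X Y : M.V) : M.nabla X (-Y) = -(M.nabla X Y) := by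
  have h := M.nabla_addr X Y (-Y)
  rw [add_neg_cancel, M.nabla_zeror] at h
  exact (neg_eq_of_add_eq_zero_right h.symm).symm

end NearlyCosymplectic

open NearlyCosymplectic

/-- For a horizontal vector field X whose projected covariant derivative
∇̄ X (the F-component of ∇X) vanishes, the bracket [X, θX] is zero. -/
theorem stmt4 (M : NearlyCosymplectic) (X : M.V)
    (hX : M.g X M.ξ = 0)
    (hpar : ∀ Y : M.V, M.nabla Y X - M.g (M.nabla Y X) M.ξ • M.ξ = 0) :
    M.bracket X (M.θ X) = 0 := by
  -- θ(θ(θY)) computed two ways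
  have auxθ : ∀ Y : M.V, M.g Y M.ξ • M.θ M.ξ = M.g (M.θ Y) M.ξ • M.ξ := by
    intro Y
    have e1 := M.θ_sq (M.θ Y)
    have e2 : M.θ (M.θ (M.θ Y)) = -(M.θ Y) + M.g Y M.ξ • M.θ M.ξ := by
      rw [M.θ_sq Y, M.θ_add, M.θ_neg, M.θ_smul]
    exact (add_left_cancel (e1.symm.trans e2)).symm
  obtain ⟨c, hθξ, hgc⟩ : ∃ c : M.A, M.θ M.ξ = c • M.ξ ∧
      ∀ Y : M.V, M.g (M.θ Y) M.ξ = M.g Y M.ξ * c := by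
    refine ⟨M.g (M.θ M.ξ) M.ξ, ?_, ?_⟩
    · have h := auxθ M.ξ
      rwa [M.ξ_unit, one_smul] at h
    · intro Y
      have h := congrArg (fun Z => M.g Z M.ξ) (auxθ Y)
      simp only [M.g_smull] at h
      rw [M.ξ_unit, mul_one] at h
      exact h.symm
  have hc2 : c * c = 0 := by
    have e1 := M.θ_sq M.ξ
    rw [M.ξ_unit, one_smul, neg_add_cancel] at e1
    rw [hθξ, M.θ_smul, hθξ, smul_smul] at e1
    have h := congrArg (fun Z => M.g Z M.ξ) e1
    simpa [M.g_smull, M.ξ_unit, M.g_zerol] using h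
  have ηθX : M.g (M.θ X) M.ξ = 0 := by rw [hgc, hX, zero_mul]
  have θθX : M.θ (M.θ X) = -X := by rw [M.θ_sq, hX, zero_smul, add_zero]
  -- skew symmetry of θ against horizontal vectors
  have Bz : ∀ Y Z : M.V, M.g Z M.ξ = 0 → M.g Y (M.θ Z) = -(M.g (M.θ Y) Z) := by
    intro Y Z hZ
    have e := M.θ_compat Y (M.θ Z)
    rw [hgc Z, hZ, zero_mul, mul_zero, sub_zero] at e
    rw [M.θ_sq Z, hZ, zero_smul, add_zero] at e
    rw [M.g_negr] at e
    exact e.symm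
  have gXθX : M.g X (M.θ X) = 0 := by
    have e := Bz X X hX
    rw [M.g_symm (M.θ X) X] at e
    exact M.half_A _ (by linear_combination e)
  -- the parallelism hypothesis, with opaque scalars
  have hpar' : ∀ Y : M.V, M.nabla Y X = M.g (M.nabla Y X) M.ξ • M.ξ := fun Y =>
    sub_eq_zero.mp (hpar Y)
  obtain ⟨hN, nXX⟩ : ∃ a : M.A, M.nabla X X = a • M.ξ := ⟨_, hpar' X⟩
  obtain ⟨fN, nTX⟩ : ∃ a : M.A, M.nabla (M.θ X) X = a • M.ξ := ⟨_, hpar' (M.θ X)⟩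
  obtain ⟨pN, nKX⟩ : ∃ a : M.A, M.nabla M.ξ X = a • M.ξ := ⟨_, hpar' M.ξ⟩
  have ghN : M.g (M.nabla X X) M.ξ = hN := by rw [nXX, M.g_smull, M.ξ_unit, mul_one]
  have gfN : M.g (M.nabla (M.θ X) X) M.ξ = fN := by rw [nTX, M.g_smull, M.ξ_unit, mul_one]
  have gξX : M.g M.ξ X = 0 := by rw [M.g_symm]; exact hX
  have gξθX : M.g M.ξ (M.θ X) = 0 := by rw [M.g_symm]; exact ηθX
  -- differentiating η(X) = 0
  have gk : ∀ Y : M.V, M.g X (M.nabla Y M.ξ) = -(M.g (M.nabla Y X) M.ξ) := by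
    intro Y
    have e := M.metric_compat Y X M.ξ
    rw [hX, M.D_zero] at e
    linear_combination -e
  -- (∇_X θ)(X) = 0
  have nθ0 : M.nabla X (M.θ X) - M.θ (M.nabla X X) = 0 := M.half_V _ (M.nearly X X)
  have nXθX : M.nabla X (M.θ X) = (hN * c) • M.ξ := by
    have e := sub_eq_zero.mp nθ0
    rw [e, nXX, M.θ_smul, hθξ, smul_smul]
  have q2eq : M.g (M.θ X) (M.nabla X M.ξ) = -(hN * c) := by
    have e := M.metric_compat X (M.θ X) M.ξ
    rw [ηθX, M.D_zero, nXθX, M.g_smull, M.ξ_unit, mul_one] at e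
    linear_combination -e
  have hgkXX : M.g (M.nabla X M.ξ) X = -hN := by
    rw [M.g_symm, gk X, ghN]
  have hξθX : M.g (M.nabla M.ξ (M.θ X)) X = 0 := by
    have e := M.metric_compat M.ξ (M.θ X) X
    rw [M.g_symm (M.θ X) X, gXθX, M.D_zero, nKX, M.g_smulr, ηθX, mul_zero, add_zero] at e
    exact e.symm
  have hBz1 : M.g (M.θ (M.nabla X M.ξ)) X = hN * c := by
    have e := Bz (M.nabla X M.ξ) X hX
    rw [M.g_symm (M.nabla X M.ξ) (M.θ X)] at e
    rw [q2eq] at e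
    linear_combination e
  -- nearly condition with (X, ξ) gives hN * c = 0
  have hc0 : hN * c = 0 := by
    apply M.half_A
    have e9 := M.nearly X M.ξ
    rw [hθξ, M.nabla_leibniz, nKX, M.θ_smul, hθξ, smul_smul] at e9
    have e9X := congrArg (fun Z => M.g Z X) e9
    simp only [M.g_addl, M.g_subl, M.g_smull, M.g_zerol] at e9X
    linear_combination -e9X + (M.D X c - pN * c) * gξX + c * hgkXX - hBz1 + hξθX
  have nXθX0 : M.nabla X (M.θ X) = 0 := by rw [nXθX, hc0, zero_smul]
  -- nearly condition with (X, θX) gives the ξ-component of ∇_{θX}θX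
  have e16 := M.nearly X (M.θ X)
  rw [θθX, M.nabla_negr, nXX, nXθX0, M.θ_zero, nTX, M.θ_smul, hθξ, smul_smul] at e16
  have e16ξ := congrArg (fun Z => M.g Z M.ξ) e16
  simp only [M.g_addl, M.g_subl, M.g_negl, M.g_smull, M.g_zerol, M.ξ_unit, mul_one] at e16ξ
  have gTT : M.g (M.nabla (M.θ X) (M.θ X)) M.ξ = hN + fN * c := by
    linear_combination e16ξ
  have q3eq : M.g (M.θ X) (M.nabla (M.θ X) M.ξ) = -(hN + fN * c) := by
    have e := M.metric_compat (M.θ X) (M.θ X) M.ξ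
    rw [ηθX, M.D_zero] at e
    linear_combination -e - gTT
  have q3s : M.g (M.nabla (M.θ X) M.ξ) (M.θ X) = -(hN + fN * c) := by
    rw [M.g_symm]; exact q3eq
  -- nearly condition with (θX, ξ)
  have gA : M.g (M.θ (M.nabla M.ξ (M.θ X))) (M.θ X) = 0 := by
    have e := M.θ_compat (M.nabla M.ξ (M.θ X)) X
    rw [hX, mul_zero, sub_zero, hξθX] at e
    exact e
  have e18 := M.nearly (M.θ X) M.ξ
  rw [θθX, hθξ, M.nabla_leibniz, M.nabla_negr, nKX] at e18
  have e18T := congrArg (fun Z => M.g Z (M.θ X)) e18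
  simp only [M.g_addl, M.g_subl, M.g_negl, M.g_smull, M.g_zerol] at e18T
  have gQ : M.g (M.θ (M.nabla (M.θ X) M.ξ)) (M.θ X) = 0 := by
    linear_combination -e18T + (M.D (M.θ X) c - pN) * gξθX + c * q3s - gA - hc0 - fN * hc2
  -- conclude fN = 0
  have hfN : fN = 0 := by
    have e1 := Bz (M.nabla (M.θ X) M.ξ) (M.θ X) ηθX
    rw [θθX, M.g_negr, gQ] at e1
    have e2 := gk (M.θ X)
    rw [gfN, M.g_symm X (M.nabla (M.θ X) M.ξ)] at e2
    linear_combination e2 + e1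
  -- the bracket vanishes
  have ht := M.torsion_free X (M.θ X)
  rw [nXθX0, nTX, hfN, zero_smul, sub_zero] at ht
  exact ht.symm
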